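/- arXiv:math/0503120 — 2 statements merged into one kernel-verified Lean document; each statement's English description precedes it below -/
import Mathlib

section
/- Let 0 < q < 1 and let ν be a positive integer. For all z ∈ ℂ and all t ∈ ℂ, F_q^{−,ν}(q·t, z) = e^{−t}·( F_q^{−,ν}(t,z) − t^ν·q^{ν(1−z)}·e^{t·[1−z]_q} ). -/
open Complex

/-- `q^w := exp(w · log q)` with the real logarithm of `q`. -/
noncomputable def qpow (q : ℝ) (w : ℂ) : ℂ := Complex.exp (w * Real.log q)

/-- `[w]_q := (1 - q^w)/(1 - q)`. -/
noncomputable def qbr (q : ℝ) (w : ℂ) : ℂ := (1 - qpow q w) / (1 - (q : ℂ))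

/-- the term of index `n+1` of the series defining `F_q^{-,ν}(t,z)`. -/
noncomputable def FmTerm (q : ℝ) (ν : ℕ) (t z : ℂ) (n : ℕ) : ℂ :=
  qpow q ((ν : ℂ) * (((n : ℂ) + 1) - z)) * Complex.exp (t * qbr q (((n : ℂ) + 1) - z))

/-- `F_q^{-,ν}(t,z)`. -/
noncomputable def Fm (q : ℝ) (ν : ℕ) (t z : ℂ) : ℂ := t ^ ν * ∑' n : ℕ, FmTerm q ν t z n

lemma qpow_add' (q : ℝ) (a b : ℂ) : qpow q (a + b) = qpow q a * qpow q b := by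
  unfold qpow; rw [add_mul, Complex.exp_add]

lemma qpow_ne_zero (q : ℝ) (w : ℂ) : qpow q w ≠ 0 := Complex.exp_ne_zero _

lemma qpow_natCast (q : ℝ) (hq0 : 0 < q) (n : ℕ) : qpow q (n : ℂ) = (q : ℂ) ^ n := by
  unfold qpow
  rw [Complex.exp_nat_mul]
  congr 1
  rw [← Complex.ofReal_exp, Real.exp_log hq0]

lemma norm_qpow (q : ℝ) (hq0 : 0 < q) (w : ℂ) : ‖qpow q w‖ = q ^ w.re := by
  rw [Real.rpow_def_of_pos hq0]
  unfold qpow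
  rw [Complex.norm_exp]
  congr 1
  simp [Complex.mul_re, mul_comm]

lemma qbr_shift (q : ℝ) (hq0 : 0 < q) (hq1 : q < 1) (w : ℂ) :
    qbr q (w + 1) = (q : ℂ) * qbr q w + 1 := by
  have hq : (1 : ℂ) - (q : ℂ) ≠ 0 := by
    intro h
    have : (q : ℂ) = 1 := by linear_combination -h
    exact (ne_of_lt hq1) (by exact_mod_cast this)
  have h1 : qpow q (w + 1) = qpow q w * (q : ℂ) := by
    rw [qpow_add']
    congr 1
    simpa using qpow_natCast q hq0 1
  unfold qbr
  rw [h1]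
  field_simp
  ring

lemma summable_FmTerm (q : ℝ) (hq0 : 0 < q) (hq1 : q < 1) (ν : ℕ) (hν : 0 < ν) (t z : ℂ) :
    Summable (FmTerm q ν t z) := by
  set M : ℝ := (1 + q ^ (1 - z.re)) / (1 - q) with hM
  set C : ℝ := q ^ ((ν : ℝ) * (1 - z.re)) * Real.exp (‖t‖ * M) with hC
  set r : ℝ := q ^ ν with hr
  have hr0 : 0 ≤ r := le_of_lt (pow_pos hq0 ν)
  have hr1 : r < 1 := pow_lt_one₀ (le_of_lt hq0) hq1 hν.ne'
  have hsum : Summable (fun n : ℕ => C * r ^ n) :=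
    (summable_geometric_of_lt_one hr0 hr1).mul_left C
  refine Summable.of_norm_bounded hsum (fun n => ?_)
  have hre : (((ν : ℂ)) * (((n : ℂ) + 1) - z)).re = (ν : ℝ) * ((n : ℝ) + 1 - z.re) := by
    simp [Complex.mul_re, Complex.sub_re, Complex.add_re]
  unfold FmTerm
  rw [norm_mul, norm_qpow q hq0, hre]
  have h1 : q ^ ((ν : ℝ) * ((n : ℝ) + 1 - z.re)) = r ^ n * q ^ ((ν : ℝ) * (1 - z.re)) := by
    rw [hr, ← Real.rpow_natCast q ν, ← Real.rpow_natCast _ n, ← Real.rpow_mul (le_of_lt hq0),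
      ← Real.rpow_add hq0]
    congr 1
    ring
  have h2 : ‖Complex.exp (t * qbr q (((n : ℂ) + 1) - z))‖ ≤ Real.exp (‖t‖ * M) := by
    rw [Complex.norm_exp]
    apply Real.exp_le_exp.mpr
    calc (t * qbr q (((n : ℂ) + 1) - z)).re ≤ ‖t * qbr q (((n : ℂ) + 1) - z)‖ :=
          Complex.re_le_norm _
      _ = ‖t‖ * ‖qbr q (((n : ℂ) + 1) - z)‖ := norm_mul _ _
      _ ≤ ‖t‖ * M := by
          apply mul_le_mul_of_nonneg_left _ (norm_nonneg t)
          unfold qbr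
          rw [norm_div, hM]
          have hden : ‖(1 : ℂ) - (q : ℂ)‖ = 1 - q := by
            rw [show (1 : ℂ) - (q : ℂ) = ((1 - q : ℝ) : ℂ) by push_cast; ring,
              Complex.norm_real, Real.norm_of_nonneg (by linarith)]
          rw [hden]
          apply div_le_div_of_nonneg_right _ (by linarith)
          calc ‖(1 : ℂ) - qpow q (((n : ℂ) + 1) - z)‖
              ≤ ‖(1 : ℂ)‖ + ‖qpow q (((n : ℂ) + 1) - z)‖ := norm_sub_le _ _
            _ ≤ 1 + q ^ (1 - z.re) := by
                rw [norm_one, norm_qpow q hq0]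
                have : (((n : ℂ) + 1) - z).re = (n : ℝ) + 1 - z.re := by
                  simp [Complex.sub_re, Complex.add_re]
                rw [this]
                have h3 : (1 : ℝ) - z.re ≤ (n : ℝ) + 1 - z.re := by
                  have : (0 : ℝ) ≤ n := Nat.cast_nonneg n
                  linarith
                exact add_le_add_right
                  (Real.rpow_le_rpow_of_exponent_ge hq0 (le_of_lt hq1) h3) 1
  rw [h1]
  have hnn : 0 ≤ r ^ n * q ^ ((ν : ℝ) * (1 - z.re)) :=
    mul_nonneg (pow_nonneg hr0 n) (Real.rpow_nonneg (le_of_lt hq0) _)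
  calc r ^ n * q ^ ((ν : ℝ) * (1 - z.re)) * ‖Complex.exp (t * qbr q (((n : ℂ) + 1) - z))‖
      ≤ r ^ n * q ^ ((ν : ℝ) * (1 - z.re)) * Real.exp (‖t‖ * M) :=
        mul_le_mul_of_nonneg_left h2 hnn
    _ = C * r ^ n := by rw [hC]; ring

theorem stmt3 (q : ℝ) (hq0 : 0 < q) (hq1 : q < 1) (ν : ℕ) (hν : 0 < ν) (z t : ℂ) :
    Fm q ν ((q : ℂ) * t) z =
      Complex.exp (-t) *
        (Fm q ν t z - t ^ ν * qpow q ((ν : ℂ) * (1 - z)) * Complex.exp (t * qbr q (1 - z))) := by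
  set P : ℂ := qpow q (ν : ℂ) with hP
  have hPne : P ≠ 0 := qpow_ne_zero q _
  have key : ∀ n : ℕ, FmTerm q ν ((q : ℂ) * t) z n
      = Complex.exp (-t) * P⁻¹ * FmTerm q ν t z (n + 1) := by
    intro n
    unfold FmTerm
    have hw : ((((n : ℕ) + 1 : ℕ) : ℂ) + 1) - z = (((n : ℂ) + 1) - z) + 1 := by
      push_cast; ring
    rw [hw]
    have h1 : qpow q ((ν : ℂ) * ((((n : ℂ) + 1) - z) + 1))
        = qpow q ((ν : ℂ) * (((n : ℂ) + 1) - z)) * P := by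
      rw [hP, ← qpow_add']
      ring_nf
    have h2 : Complex.exp (((q : ℂ) * t) * qbr q (((n : ℂ) + 1) - z))
        = Complex.exp (-t) * Complex.exp (t * qbr q ((((n : ℂ) + 1) - z) + 1)) := by
      rw [qbr_shift q hq0 hq1]
      rw [← Complex.exp_add]
      congr 1
      ring
    rw [h1, h2]
    field_simp
  have hsum := summable_FmTerm q hq0 hq1 ν hν t z
  have htail : ∑' n : ℕ, FmTerm q ν t z (n + 1)
      = (∑' n : ℕ, FmTerm q ν t z n) - FmTerm q ν t z 0 := by
    rw [Summable.tsum_eq_zero_add hsum]; ring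
  have hqpow : ((q : ℂ) * t) ^ ν = P * t ^ ν := by
    rw [hP, qpow_natCast q hq0, mul_pow]
  unfold Fm
  rw [tsum_congr key, tsum_mul_left, htail, hqpow]
  have h0 : FmTerm q ν t z 0
      = qpow q ((ν : ℂ) * (1 - z)) * Complex.exp (t * qbr q (1 - z)) := by
    unfold FmTerm
    norm_num
  rw [h0]
  field_simp
end

section
/- Let 0 < q < 1, let ν be a positive integer, let z = x + iy ∈ D_q (x, y real) and set β_y := cos(y·log q). Then for every real t > 0, |F_q^{+,ν}(t,z)| ≤ exp(−t·(β_y·q^{−x} − 1)/(1 − q)) · ( t^ν·q^{−νx} + (ν·e^{−1}/β_y)^ν / (1 − exp(−t·β_y·q^{−x})) ). -/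
open Complex

/-- the `n`-th term of the series defining `F_q^{+,ν}(t,z)`. -/
noncomputable def FpTerm (q : ℝ) (ν : ℕ) (t z : ℂ) (n : ℕ) : ℂ :=
  qpow q (-(ν : ℂ) * ((n : ℂ) + z)) *
    Complex.exp (-t * qpow q (-((n : ℂ) + z)) * qbr q ((n : ℂ) + z))

/-- `F_q^{+,ν}(t,z)`. -/
noncomputable def Fp (q : ℝ) (ν : ℕ) (t z : ℂ) : ℂ := t ^ ν * ∑' n : ℕ, FpTerm q ν t z n

lemma pow_exp_bound (ν : ℕ) (hν : 0 < ν) (s : ℝ) (hs : 0 ≤ s) :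
    s ^ ν * Real.exp (-s) ≤ ((ν:ℝ) * Real.exp (-1)) ^ ν := by
  have hν' : (0:ℝ) < ν := Nat.cast_pos.mpr hν
  have h1 : s / ν * Real.exp (-(s/ν)) ≤ Real.exp (-1) := by
    have h2 : s/ν ≤ Real.exp (s/ν - 1) := by
      have := Real.add_one_le_exp (s/ν - 1); linarith
    calc s/ν * Real.exp (-(s/ν)) ≤ Real.exp (s/ν - 1) * Real.exp (-(s/ν)) :=
          mul_le_mul_of_nonneg_right h2 (Real.exp_nonneg _)
      _ = Real.exp (-1) := by rw [← Real.exp_add]; ring_nf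
  have h2 : s * Real.exp (-(s/ν)) ≤ (ν:ℝ) * Real.exp (-1) := by
    have h := mul_le_mul_of_nonneg_left h1 hν'.le
    calc s * Real.exp (-(s/ν)) = (ν:ℝ) * (s/ν * Real.exp (-(s/ν))) := by field_simp
      _ ≤ (ν:ℝ) * Real.exp (-1) := h
  have h3 : s ^ ν * Real.exp (-s) = (s * Real.exp (-(s/ν))) ^ ν := by
    rw [mul_pow, ← Real.exp_nat_mul]
    congr 2
    field_simp
  rw [h3]
  exact pow_le_pow_left₀ (mul_nonneg hs (Real.exp_nonneg _)) h2 ν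

lemma aux_sum (q : ℝ) (hq0 : 0 < q) (hq1 : q < 1) (ν : ℕ) (hν : 0 < ν)
    (t β a : ℝ) (ht : 0 < t) (hβ : 0 < β) (ha : 0 < a) (N : ℕ → ℝ)
    (hN : ∀ n, N n = (a * q⁻¹^n) ^ ν * Real.exp (-t * ((a * q⁻¹^n) * β - 1)/(1-q))) :
    Summable N ∧ t^ν * ∑' n, N n ≤
      Real.exp (-t * (β * a - 1)/(1-q)) *
        (t^ν * a^ν + ((ν:ℝ)*Real.exp (-1)/β)^ν / (1 - Real.exp (-t*β*a))) := by
  have hq' : (0:ℝ) < 1 - q := by linarith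
  have htν : (0:ℝ) < t^ν := pow_pos ht ν
  set E := Real.exp (-t * (β*a-1)/(1-q)) with hE
  set r := Real.exp (-t*β*a) with hr
  set C := ((ν:ℝ)*Real.exp (-1)/β)^ν with hC
  have hE0 : 0 < E := Real.exp_pos _
  have hr0 : 0 < r := Real.exp_pos _
  have hr1 : r < 1 := by
    rw [hr]
    have : -t*β*a < 0 := by nlinarith [mul_pos (mul_pos ht hβ) ha]
    calc Real.exp (-t*β*a) < Real.exp 0 := Real.exp_lt_exp.mpr this
      _ = 1 := Real.exp_zero
  have hC0 : 0 ≤ C := by rw [hC]; positivity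
  have hbound : ∀ m:ℕ, t^ν * N (m+1) ≤ E * C * r^m := by
    intro m
    set c := a * q⁻¹^(m+1) with hc
    have hc0 : 0 < c := by rw [hc]; positivity
    have hm1 : (1:ℝ) + m*(1-q) ≤ q⁻¹^m := by
      have hb := one_add_mul_le_pow (show (-2:ℝ) ≤ q⁻¹ - 1 by nlinarith [inv_pos.mpr hq0]) m
      have he : ((1:ℝ) + (q⁻¹ - 1)) = q⁻¹ := by ring
      rw [he] at hb
      have hle : (1-q) ≤ q⁻¹ - 1 := by
        have h := mul_inv_cancel₀ (ne_of_gt hq0)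
        nlinarith
      nlinarith [mul_le_mul_of_nonneg_left hle (Nat.cast_nonneg m)]
    have hkey : t*β*c + t*β*a*(m:ℝ) ≤ t*β*((c - a)/(1-q)) := by
      have h1 : c + a*(m:ℝ) ≤ (c - a)/(1-q) := by
        rw [le_div_iff₀ hq']
        have hq2 : q * q⁻¹^(m+1) = q⁻¹^m := by
          rw [pow_succ]
          field_simp
        rw [hc]
        nlinarith [mul_le_mul_of_nonneg_left hm1 ha.le, hq2]
      have h2 := mul_le_mul_of_nonneg_left h1 (mul_pos ht hβ).le
      calc t*β*c + t*β*a*(m:ℝ) = t*β*(c + a*(m:ℝ)) := by ring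
        _ ≤ t*β*((c-a)/(1-q)) := h2
    have hexp : Real.exp (-t * (c*β - 1)/(1-q)) ≤ E * (Real.exp (-(t*β*c)) * r^m) := by
      rw [hE, hr, ← Real.exp_nat_mul, ← Real.exp_add, ← Real.exp_add]
      apply Real.exp_le_exp.mpr
      have hid : -t * (c*β-1)/(1-q) = -t*(β*a-1)/(1-q) + (-(t*β*((c-a)/(1-q)))) := by
        field_simp
        ring
      rw [hid]
      have h3 : -(t*β*((c-a)/(1-q))) ≤ -(t*β*c) + (m:ℝ) * (-t*β*a) := by linarith
      linarith
    have hCb : (t*c)^ν * Real.exp (-(t*β*c)) ≤ C := by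
      have hs : 0 ≤ t*β*c := by positivity
      have hpb := pow_exp_bound ν hν (t*β*c) hs
      have hβν : (0:ℝ) < β^ν := pow_pos hβ ν
      rw [hC, div_pow, le_div_iff₀ hβν]
      calc (t*c)^ν * Real.exp (-(t*β*c)) * β^ν = (t*β*c)^ν * Real.exp (-(t*β*c)) := by
            rw [show t*β*c = (t*c)*β from by ring, mul_pow]; ring
        _ ≤ ((ν:ℝ)*Real.exp (-1))^ν := hpb
    have hNe : t^ν * N (m+1) = (t*c)^ν * Real.exp (-t * (c*β-1)/(1-q)) := by
      rw [hN (m+1), ← hc, mul_pow]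
      ring
    calc t^ν * N (m+1) = (t*c)^ν * Real.exp (-t*(c*β-1)/(1-q)) := hNe
      _ ≤ (t*c)^ν * (E * (Real.exp (-(t*β*c)) * r^m)) :=
          mul_le_mul_of_nonneg_left hexp (by positivity)
      _ = ((t*c)^ν * Real.exp (-(t*β*c))) * (E * r^m) := by ring
      _ ≤ C * (E * r^m) := mul_le_mul_of_nonneg_right hCb (by positivity)
      _ = E * C * r^m := by ring
  have hNnonneg : ∀ n, 0 ≤ N n := by
    intro n; rw [hN]; positivity
  have hsum1 : Summable (fun m => N (m+1)) := by
    apply Summable.of_nonneg_of_le (fun m => hNnonneg _) (fun m => ?_)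
      ((summable_geometric_of_lt_one hr0.le hr1).mul_left (E*C/t^ν))
    have h := hbound m
    rw [div_mul_eq_mul_div, le_div_iff₀ htν]
    calc N (m+1) * t^ν = t^ν * N (m+1) := by ring
      _ ≤ E*C*r^m := h
  have hsum : Summable N := (summable_nat_add_iff 1).mp hsum1
  refine ⟨hsum, ?_⟩
  have hN0 : N 0 = a^ν * E := by
    rw [hN, hE]
    simp only [pow_zero, mul_one]
    rw [show -t*(a*β-1)/(1-q) = -t*(β*a-1)/(1-q) from by ring]
  rw [Summable.tsum_eq_zero_add hsum, mul_add, hN0]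
  have hrsum : ∑' m:ℕ, r^m = (1-r)⁻¹ := tsum_geometric_of_lt_one hr0.le hr1
  have h2 : t^ν * ∑' m, N (m+1) ≤ E * (C * (1-r)⁻¹) := by
    calc t^ν * ∑' m, N (m+1) = ∑' m, t^ν * N (m+1) := (tsum_mul_left).symm
      _ ≤ ∑' m, E*C*r^m :=
          Summable.tsum_le_tsum hbound (hsum1.mul_left _)
            ((summable_geometric_of_lt_one hr0.le hr1).mul_left (E*C))
      _ = E*C*(1-r)⁻¹ := by rw [tsum_mul_left, hrsum]
      _ = E*(C*(1-r)⁻¹) := by ring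
  have heq : t^ν * (a^ν * E) = E * (t^ν * a^ν) := by ring
  rw [mul_add, div_eq_mul_inv]
  linarith

lemma norm_FpTerm (q : ℝ) (hq0 : 0 < q) (hq1 : q < 1) (ν : ℕ) (t : ℝ) (z : ℂ) (n : ℕ) :
    ‖FpTerm q ν (t:ℂ) z n‖ =
      Real.exp (-((n:ℝ) + z.re) * Real.log q) ^ ν *
        Real.exp (-t * (Real.exp (-((n:ℝ) + z.re) * Real.log q) *
          Real.cos (z.im * Real.log q) - 1) / (1 - q)) := by
  set L := Real.log q with hLdef
  set w : ℂ := (n:ℂ) + z with hw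
  have hinv : qpow q (-w) * qpow q w = 1 := by
    unfold qpow
    rw [← Complex.exp_add]
    have : -w * (L:ℂ) + w * (L:ℂ) = 0 := by ring
    rw [this, Complex.exp_zero]
  have h1 : (1 - (q:ℂ)) ≠ 0 := by
    intro h
    have : (q:ℂ) = 1 := by linear_combination -h
    have : q = 1 := by exact_mod_cast this
    linarith
  have harg : -(t:ℂ) * qpow q (-w) * qbr q w = ((-t/(1-q) : ℝ) : ℂ) * (qpow q (-w) - 1) := by
    unfold qbr
    push_cast
    field_simp [h1]
    linear_combination (t:ℂ) * hinv
  unfold FpTerm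
  rw [← hw, harg]
  rw [norm_mul]
  have hn1 : ‖qpow q (-(ν:ℂ) * w)‖ = Real.exp (-((n:ℝ)+z.re) * L) ^ ν := by
    unfold qpow
    rw [Complex.norm_exp, ← Real.exp_nat_mul]
    congr 1
    simp [hw, mul_re, mul_im, add_re, add_im]
    ring
  have hn2 : ‖Complex.exp (((-t/(1-q) : ℝ) : ℂ) * (qpow q (-w) - 1))‖ =
      Real.exp (-t * (Real.exp (-((n:ℝ)+z.re) * L) * Real.cos (z.im * L) - 1) / (1 - q)) := by
    rw [Complex.norm_exp]
    congr 1
    rw [Complex.re_ofReal_mul]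
    have hre : (qpow q (-w)).re = Real.exp (-((n:ℝ)+z.re) * L) * Real.cos (z.im * L) := by
      unfold qpow
      rw [Complex.exp_re]
      have ha : (-w * (L:ℂ)).re = -((n:ℝ)+z.re) * L := by
        simp [hw, mul_re, add_re, add_im]
      have hb : (-w * (L:ℂ)).im = -(z.im * L) := by
        simp [hw, mul_im, add_re, add_im]
      rw [ha, hb, Real.cos_neg]
    simp only [sub_re, hre, Complex.one_re]
    ring
  rw [hn1, hn2]


theorem stmt4 (q : ℝ) (hq0 : 0 < q) (hq1 : q < 1) (ν : ℕ) (hν : 0 < ν)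
    (z : ℂ) (hz : |z.im| < Real.pi / (2 * |Real.log q|)) (t : ℝ) (ht : 0 < t) :
    ‖Fp q ν (t : ℂ) z‖ ≤
      Real.exp (-t * (Real.cos (z.im * Real.log q) * q ^ (-z.re) - 1) / (1 - q)) *
        (t ^ ν * q ^ (-(ν : ℝ) * z.re) +
          ((ν : ℝ) * Real.exp (-1) / Real.cos (z.im * Real.log q)) ^ ν /
            (1 - Real.exp (-t * Real.cos (z.im * Real.log q) * q ^ (-z.re)))) := by
  have hL : Real.log q < 0 := Real.log_neg hq0 hq1
  have hLne : Real.log q ≠ 0 := ne_of_lt hL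
  have habs : 0 < |Real.log q| := abs_pos.mpr hLne
  have hβ : 0 < Real.cos (z.im * Real.log q) := by
    apply Real.cos_pos_of_mem_Ioo
    have h1 : |z.im * Real.log q| < Real.pi / 2 := by
      rw [abs_mul]
      have h2 : |z.im| * |Real.log q| < (Real.pi / (2 * |Real.log q|)) * |Real.log q| :=
        mul_lt_mul_of_pos_right hz habs
      have h3 : (Real.pi / (2 * |Real.log q|)) * |Real.log q| = Real.pi / 2 := by
        field_simp
      linarith
    constructor
    · linarith [(abs_lt.mp h1).1]
    · exact (abs_lt.mp h1).2
  have ha : (0:ℝ) < q ^ (-z.re) := Real.rpow_pos_of_pos hq0 _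
  have haq : ∀ n:ℕ, Real.exp (-((n:ℝ) + z.re) * Real.log q) = q ^ (-z.re) * q⁻¹ ^ n := by
    intro n
    rw [Real.rpow_def_of_pos hq0,
      show -((n:ℝ)+z.re)*Real.log q = Real.log q * (-z.re) + (n:ℝ)*(-Real.log q) from by ring,
      Real.exp_add, Real.exp_nat_mul, Real.exp_neg, Real.exp_log hq0]
  have hNkey : ∀ n, ‖FpTerm q ν (t:ℂ) z n‖ =
      (q ^ (-z.re) * q⁻¹ ^ n) ^ ν *
        Real.exp (-t * ((q ^ (-z.re) * q⁻¹ ^ n) * Real.cos (z.im * Real.log q) - 1)/(1-q)) := by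
    intro n
    rw [norm_FpTerm q hq0 hq1 ν t z n, haq n]
  obtain ⟨hsum, hle⟩ := aux_sum q hq0 hq1 ν hν t (Real.cos (z.im * Real.log q)) (q ^ (-z.re))
    ht hβ ha (fun n => ‖FpTerm q ν (t:ℂ) z n‖) hNkey
  have hnorm : ‖Fp q ν (t:ℂ) z‖ = t ^ ν * ‖∑' n, FpTerm q ν (t:ℂ) z n‖ := by
    rw [Fp, norm_mul, norm_pow, Complex.norm_real, Real.norm_eq_abs, abs_of_pos ht]
  have htsum : ‖∑' n, FpTerm q ν (t:ℂ) z n‖ ≤ ∑' n, ‖FpTerm q ν (t:ℂ) z n‖ :=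
    norm_tsum_le_tsum_norm hsum
  have hpow : q ^ (-(ν : ℝ) * z.re) = (q ^ (-z.re)) ^ ν := by
    rw [← Real.rpow_natCast (q ^ (-z.re)) ν, ← Real.rpow_mul hq0.le]
    congr 1
    ring
  rw [hnorm, hpow]
  calc t ^ ν * ‖∑' n, FpTerm q ν (t:ℂ) z n‖ ≤ t ^ ν * ∑' n, ‖FpTerm q ν (t:ℂ) z n‖ :=
        mul_le_mul_of_nonneg_left htsum (pow_nonneg ht.le ν)
    _ ≤ _ := hle
end
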